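/- mfw({A_{k,t}, B_{k,t}}) = 2t-1 for k ≥ 2, t ≥ 1: there exists r such that every permutation matrix (r, 2t-1)-formation contains A_{k,t} or B_{k,t}, and for every r there exists a permutation matrix (r, 2t-2)-formation avoiding both. -/

import Mathlib

def hcat (r : ℕ) (B : ℕ → ℕ → ℕ → Prop) : ℕ → ℕ → Prop :=
  fun i j => B (j / r) i (j % r)

def idMat (r : ℕ) : ℕ → ℕ → Prop := fun i j => j < r ∧ i = j

def revMat (r : ℕ) : ℕ → ℕ → Prop := fun i j => j < r ∧ i = r - 1 - j

def IsPermMat (r : ℕ) (M : ℕ → ℕ → Prop) : Prop :=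
  ∃ π : ℕ → ℕ, Set.BijOn π (Set.Iio r) (Set.Iio r) ∧ ∀ i j, M i j ↔ (j < r ∧ i = π j)

def PContains (A : ℕ → ℕ → Prop) (nA mA : ℕ) (P : ℕ → ℕ → Prop) (p q : ℕ) : Prop :=
  ∃ ri ci : ℕ → ℕ, StrictMono ri ∧ StrictMono ci ∧
    (∀ a < p, ri a < nA) ∧ (∀ b < q, ci b < mA) ∧
    ∀ a b, a < p → b < q → P a b → A (ri a) (ci b)

/-- `A_{k,t}`: horizontal concatenation of `t` copies of the `k × k` identity matrix. -/
def Amat (k : ℕ) : ℕ → ℕ → Prop := hcat k (fun _ => idMat k)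

/-- `B_{k,t}`: the horizontal reflection of `A_{k,t}`. -/
def Bmat (k : ℕ) : ℕ → ℕ → Prop := hcat k (fun _ => revMat k)


section ES
variable {α : Type*} [LinearOrder α]

open Function Finset

theorem my_erdos_szekeres {r s n : ℕ} {f : Fin n → α} (hn : r * s < n) (hf : Injective f) :
    (∃ t : Finset (Fin n), r < #t ∧ StrictMonoOn f ↑t) ∨
      ∃ t : Finset (Fin n), s < #t ∧ StrictAntiOn f ↑t := by
  let inc_sequences_ending_in : Fin n → Finset (Finset (Fin n)) := fun i =>
    univ.powerset.filter fun t => Finset.max t = i ∧ StrictMonoOn f ↑t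
  let dec_sequences_ending_in : Fin n → Finset (Finset (Fin n)) := fun i =>
    univ.powerset.filter fun t => Finset.max t = i ∧ StrictAntiOn f ↑t
  have inc_i : ∀ i, {i} ∈ inc_sequences_ending_in i := fun i => by
    simp [inc_sequences_ending_in, StrictMonoOn]
  have dec_i : ∀ i, {i} ∈ dec_sequences_ending_in i := fun i => by
    simp [dec_sequences_ending_in, StrictAntiOn]
  let ab' : Fin n → ℕ × ℕ := by
    intro i
    apply
      (max' ((inc_sequences_ending_in i).image card) (Nonempty.image ⟨{i}, inc_i i⟩ _),
        max' ((dec_sequences_ending_in i).image card) (Nonempty.image ⟨{i}, dec_i i⟩ _))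
  generalize hab : ab' = ab
  rsuffices ⟨i, hi⟩ : ∃ i, r < (ab i).1 ∨ s < (ab i).2
  · refine Or.imp ?_ ?_ hi
    on_goal 1 =>
      have : (ab i).1 ∈ image card (inc_sequences_ending_in i) := by
        simp only [← hab]; exact max'_mem _ (Nonempty.image ⟨{i}, inc_i i⟩ _)
    on_goal 2 =>
      have : (ab i).2 ∈ image card (dec_sequences_ending_in i) := by
        simp only [← hab]; exact max'_mem _ (Nonempty.image ⟨{i}, dec_i i⟩ _)
    all_goals
      intro hi
      rw [mem_image] at this
      obtain ⟨t, ht₁, ht₂⟩ := this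
      refine ⟨t, by rwa [ht₂], ?_⟩
      rw [mem_filter] at ht₁
      apply ht₁.2.2
  have : Injective ab := by
    simp only [← hab]
    apply Function.Injective.of_lt_imp_ne
    intro i j k q
    injection q with q₁ q₂
    cases lt_or_gt_of_ne fun _ => ne_of_lt ‹i < j› (hf ‹f i = f j›)
    on_goal 1 =>
      apply ne_of_lt _ q₁
      have : (ab' i).1 ∈ image card (inc_sequences_ending_in i) := by exact max'_mem _ (Nonempty.image ⟨{i}, inc_i i⟩ _)
    on_goal 2 =>
      apply ne_of_lt _ q₂
      have : (ab' i).2 ∈ image card (dec_sequences_ending_in i) := by exact max'_mem _ (Nonempty.image ⟨{i}, dec_i i⟩ _)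
    all_goals
      rw [Nat.lt_iff_add_one_le]
      apply le_max'
      rw [mem_image] at this ⊢
      rcases this with ⟨t, ht₁, ht₂⟩
      rw [mem_filter] at ht₁
      have : t.max = i := by simp only [ht₁.2.1]
      refine ⟨insert j t, ?_, ?_⟩
      · rw [mem_filter]
        refine ⟨?_, ?_, ?_⟩
        · rw [mem_powerset]; apply subset_univ
        · convert max_insert (a := j) (s := t)
          rw [ht₁.2.1, max_eq_left]
          apply WithBot.coe_le_coe.mpr (le_of_lt ‹i < j›)
        simp only [StrictMonoOn, StrictAntiOn, coe_insert, Set.mem_insert_iff, mem_coe]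
        rintro x ⟨rfl | _⟩ y ⟨rfl | _⟩ _
        · apply (irrefl _ ‹j < j›).elim
        · exfalso
          apply not_le_of_gt (_root_.trans ‹i < j› ‹j < y›) (le_max_of_eq ‹y ∈ t› ‹t.max = i›)
        · first
          | apply lt_of_le_of_lt _ ‹f i < f j›
          | apply lt_of_lt_of_le ‹f j < f i› _
          rcases lt_or_eq_of_le (le_max_of_eq ‹x ∈ t› ‹t.max = i›) with (_ | rfl)
          · apply le_of_lt (ht₁.2.2 ‹x ∈ t› (mem_of_max ‹t.max = i›) ‹x < i›)
          · rfl
        · apply ht₁.2.2 ‹x ∈ t› ‹y ∈ t› ‹x < y›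
      · rw [card_insert_of_notMem, ht₂]
        intro
        apply not_le_of_gt ‹i < j› (le_max_of_eq ‹j ∈ t› ‹t.max = i›)
  by_contra! q
  let ran : Finset (ℕ × ℕ) := (range r).image Nat.succ ×ˢ (range s).image Nat.succ
  have : image ab univ ⊆ ran := by
    rintro ⟨x₁, x₂⟩
    simp only [ran, mem_image, exists_prop, mem_range, mem_univ, mem_product, true_and,
      Prod.ext_iff]
    rintro ⟨i, rfl, rfl⟩
    specialize q i
    have z : 1 ≤ (ab i).1 ∧ 1 ≤ (ab i).2 := by
      simp only [← hab]
      constructor <;>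
        · apply le_max'
          rw [mem_image]
          exact ⟨{i}, by solve_by_elim, card_singleton i⟩
    exact ⟨⟨(ab i).1 - 1, by omega⟩, (ab i).2 - 1, by omega⟩
  apply not_le_of_gt hn
  simpa [ran, Nat.succ_injective, card_image_of_injective, ‹Injective ab›] using card_le_card this

end ES

lemma es_nat (f : ℕ → ℕ) (n m : ℕ) (hn : m * m < n) (hf : Set.InjOn f (Set.Iio n)) :
    ∃ σ : ℕ → ℕ, StrictMonoOn σ (Set.Iio (m + 1)) ∧ (∀ i < m + 1, σ i < n) ∧
      (StrictMonoOn (f ∘ σ) (Set.Iio (m + 1)) ∨ StrictAntiOn (f ∘ σ) (Set.Iio (m + 1))) := by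
  classical
  have hF : Function.Injective (fun i : Fin n => f i.val) := by
    intro i j h
    exact Fin.ext (hf (Set.mem_Iio.mpr i.isLt) (Set.mem_Iio.mpr j.isLt) h)
  rcases my_erdos_szekeres (r := m) (s := m) hn hF with ⟨t, htc, htm⟩ | ⟨t, htc, htm⟩
  · obtain ⟨t', ht'sub, ht'card⟩ := Finset.exists_subset_card_eq (s := t) (n := m + 1) (by omega)
    set emb := t'.orderEmbOfFin ht'card with hemb
    refine ⟨fun i => if h : i < m + 1 then (emb ⟨i, h⟩ : Fin n).val else n + i, ?_, ?_, Or.inl ?_⟩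
    · intro i hi j hj hij
      simp only [Set.mem_Iio] at hi hj
      simp only [dif_pos hi, dif_pos hj]
      exact emb.strictMono (show (⟨i, hi⟩ : Fin (m+1)) < ⟨j, hj⟩ from hij)
    · intro i hi; simp only [dif_pos hi]; exact (emb ⟨i, hi⟩).isLt
    · intro i hi j hj hij
      simp only [Set.mem_Iio] at hi hj
      simp only [Function.comp_apply, dif_pos hi, dif_pos hj]
      have h1 : emb ⟨i, hi⟩ ∈ t := ht'sub (t'.orderEmbOfFin_mem ht'card ⟨i, hi⟩)
      have h2 : emb ⟨j, hj⟩ ∈ t := ht'sub (t'.orderEmbOfFin_mem ht'card ⟨j, hj⟩)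
      exact htm h1 h2 (emb.strictMono (show (⟨i, hi⟩ : Fin (m+1)) < ⟨j, hj⟩ from hij))
  · obtain ⟨t', ht'sub, ht'card⟩ := Finset.exists_subset_card_eq (s := t) (n := m + 1) (by omega)
    set emb := t'.orderEmbOfFin ht'card with hemb
    refine ⟨fun i => if h : i < m + 1 then (emb ⟨i, h⟩ : Fin n).val else n + i, ?_, ?_, Or.inr ?_⟩
    · intro i hi j hj hij
      simp only [Set.mem_Iio] at hi hj
      simp only [dif_pos hi, dif_pos hj]
      exact emb.strictMono (show (⟨i, hi⟩ : Fin (m+1)) < ⟨j, hj⟩ from hij)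
    · intro i hi; simp only [dif_pos hi]; exact (emb ⟨i, hi⟩).isLt
    · intro i hi j hj hij
      simp only [Set.mem_Iio] at hi hj
      simp only [Function.comp_apply, dif_pos hi, dif_pos hj]
      have h1 : emb ⟨i, hi⟩ ∈ t := ht'sub (t'.orderEmbOfFin_mem ht'card ⟨i, hi⟩)
      have h2 : emb ⟨j, hj⟩ ∈ t := ht'sub (t'.orderEmbOfFin_mem ht'card ⟨j, hj⟩)
      exact htm h1 h2 (emb.strictMono (show (⟨i, hi⟩ : Fin (m+1)) < ⟨j, hj⟩ from hij))

def esN : ℕ → ℕ → ℕ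
  | 0, k => k
  | N + 1, k => esN N k * esN N k

lemma esN_ge (N k : ℕ) (hk : 1 ≤ k) : k ≤ esN N k := by
  induction N with
  | zero => simp [esN]
  | succ N ih => calc k ≤ esN N k := ih
                  _ ≤ esN N k * esN N k := Nat.le_mul_of_pos_left _ (by omega)

lemma ramseyPerm (k : ℕ) (hk : 1 ≤ k) :
    ∀ N (g : ℕ → ℕ → ℕ), (∀ j < N, Set.InjOn (g j) (Set.Iio (esN N k))) →
    ∃ ρ : ℕ → ℕ, StrictMonoOn ρ (Set.Iio k) ∧ (∀ a < k, ρ a < esN N k) ∧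
      ∀ j < N, StrictMonoOn (g j ∘ ρ) (Set.Iio k) ∨ StrictAntiOn (g j ∘ ρ) (Set.Iio k) := by
  intro N
  induction N with
  | zero =>
    intro g _
    exact ⟨id, fun x _ y _ h => h, fun a ha => ha, fun j hj => absurd hj (by omega)⟩
  | succ N ih =>
    intro g hg
    set M := esN N k with hM
    have hM1 : 1 ≤ M := le_trans hk (esN_ge N k hk)
    have hMM : (M - 1) * (M - 1) < esN (N + 1) k := by
      have : esN (N + 1) k = M * M := rfl
      rw [this]
      exact Nat.mul_lt_mul_of_lt_of_le (by omega) (by omega) (by omega)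
    obtain ⟨σ, hσmono, hσlt, hσm⟩ := es_nat (g 0) (esN (N + 1) k) (M - 1) hMM
      (hg 0 (by omega))
    rw [show M - 1 + 1 = M by omega] at hσmono hσlt hσm
    have hσmap : Set.MapsTo σ (Set.Iio M) (Set.Iio (esN (N + 1) k)) := fun x hx =>
      Set.mem_Iio.mpr (hσlt x (Set.mem_Iio.mp hx))
    obtain ⟨ρ', hρ'mono, hρ'lt, hρ'm⟩ := ih (fun j => g (j + 1) ∘ σ) (fun j hj =>
      Set.InjOn.comp (hg (j + 1) (by omega)) hσmono.injOn hσmap)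
    have hρ'map : Set.MapsTo ρ' (Set.Iio k) (Set.Iio M) := fun x hx =>
      Set.mem_Iio.mpr (hρ'lt x (Set.mem_Iio.mp hx))
    refine ⟨σ ∘ ρ', hσmono.comp hρ'mono hρ'map, fun a ha => hσlt _ (hρ'lt a ha), ?_⟩
    intro j hj
    match j with
    | 0 =>
      rcases hσm with h | h
      · exact Or.inl (h.comp hρ'mono hρ'map)
      · exact Or.inr (h.comp_strictMonoOn hρ'mono hρ'map)
    | j + 1 =>
      exact hρ'm j (by omega)

def extSM (f : ℕ → ℕ) (n : ℕ) : ℕ → ℕ := fun m =>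
  if m < n then f m else f (n - 1) + (m - (n - 1))

lemma extSM_eq {f : ℕ → ℕ} {n m : ℕ} (h : m < n) : extSM f n m = f m := if_pos h

lemma extSM_strictMono {f : ℕ → ℕ} {n : ℕ} (hn : 0 < n) (hf : StrictMonoOn f (Set.Iio n)) :
    StrictMono (extSM f n) := by
  intro m m' hmm
  unfold extSM
  by_cases h1 : m < n <;> by_cases h2 : m' < n
  · rw [if_pos h1, if_pos h2]; exact hf (Set.mem_Iio.mpr h1) (Set.mem_Iio.mpr h2) hmm
  · rw [if_pos h1, if_neg h2]
    have hfm : f m ≤ f (n - 1) := by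
      rcases Nat.lt_or_ge m (n - 1) with h | h
      · exact le_of_lt (hf (Set.mem_Iio.mpr h1) (Set.mem_Iio.mpr (by omega)) h)
      · have : m = n - 1 := by omega
        rw [this]
    omega
  · omega
  · rw [if_neg h1, if_neg h2]; omega

lemma phi_bound (p n : ℕ) (s : ℕ → ℕ) (hp : p ≤ 1)
    (h1 : ∀ g < n, s g < s (g + 1))
    (h2 : ∀ g < n, s (g + 1) = s g + 1 → s g % 2 = p) :
    ∀ g ≤ n, p + 2 * g ≤ s g + 1 ∧ (s g % 2 = p → p + 2 * g ≤ s g) := by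
  intro g
  induction g with
  | zero => intro _; constructor <;> omega
  | succ g ihg =>
    intro hgn
    have ih := ihg (by omega)
    have hs1 := h1 g (by omega)
    have ih1 := ih.1
    by_cases hpar : s g % 2 = p
    · have ih2 := ih.2 hpar
      by_cases heq : s (g + 1) = s g + 1
      · constructor
        · omega
        · intro hpar'; omega
      · constructor
        · omega
        · intro hpar'; omega
    · by_cases heq : s (g + 1) = s g + 1
      · have := h2 g (by omega) heq; omega
      · constructor
        · omega
        · intro hpar'; omega

lemma buildContain (r k t : ℕ) (hk : 2 ≤ k) (ht : 1 ≤ t) (hr0 : 0 < r)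
    (F P : ℕ → ℕ → Prop) (u : ℕ → ℕ) (hu : ∀ j < k, u j < k)
    (hP : ∀ a b, a < k → b < t * k → P a b → a = u (b % k))
    (blk : ℕ → ℕ) (hblk : StrictMonoOn blk (Set.Iio t)) (hblkmax : ∀ j < t, blk j < 2 * t - 1)
    (ρ : ℕ → ℕ) (hρmono : StrictMonoOn ρ (Set.Iio k)) (hρlt : ∀ a < k, ρ a < r)
    (off : ℕ → ℕ → ℕ)
    (hofflt : ∀ j < t, ∀ a < k, off (blk j) (ρ a) < r)
    (hoffmono : ∀ j < t, ∀ i i', i < k → i' < k → i < i' →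
        off (blk j) (ρ (u i)) < off (blk j) (ρ (u i')))
    (hF : ∀ j < t, ∀ a < k, F (ρ a) (blk j * r + off (blk j) (ρ a))) :
    PContains F r ((2 * t - 1) * r) P k (t * k) := by
  have hk0 : 0 < k := by omega
  have htk : 0 < t * k := Nat.mul_pos (by omega) hk0
  set c : ℕ → ℕ := fun m => blk (m / k) * r + off (blk (m / k)) (ρ (u (m % k))) with hc
  have hdiv : ∀ m, m < t * k → m / k < t := fun m hm =>
    Nat.div_lt_of_lt_mul (by rwa [Nat.mul_comm] at hm)
  have hcmono : StrictMonoOn c (Set.Iio (t * k)) := by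
    intro m hm m' hm' hmm
    simp only [Set.mem_Iio] at hm hm'
    have hd : m / k ≤ m' / k := Nat.div_le_div_right (le_of_lt hmm)
    rcases eq_or_lt_of_le hd with hdeq | hdlt
    · have hmod : m % k < m' % k := by
        have e1 : k * (m / k) + m % k = m := Nat.div_add_mod m k
        have e2 : k * (m / k) + m' % k = m' := by rw [hdeq]; exact Nat.div_add_mod m' k
        omega
      show blk (m / k) * r + off (blk (m / k)) (ρ (u (m % k))) <
        blk (m' / k) * r + off (blk (m' / k)) (ρ (u (m' % k)))
      rw [hdeq]
      exact Nat.add_lt_add_left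
        (hoffmono (m' / k) (hdiv m' hm') (m % k) (m' % k)
          (Nat.mod_lt _ hk0) (Nat.mod_lt _ hk0) hmod) _
    · have h1 : off (blk (m / k)) (ρ (u (m % k))) < r :=
        hofflt (m / k) (hdiv m hm) (u (m % k)) (hu _ (Nat.mod_lt _ hk0))
      have hbb : blk (m / k) < blk (m' / k) :=
        hblk (Set.mem_Iio.mpr (hdiv m hm)) (Set.mem_Iio.mpr (hdiv m' hm')) hdlt
      show blk (m / k) * r + off (blk (m / k)) (ρ (u (m % k))) <
        blk (m' / k) * r + off (blk (m' / k)) (ρ (u (m' % k)))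
      calc blk (m / k) * r + off (blk (m / k)) (ρ (u (m % k)))
          < blk (m / k) * r + r := Nat.add_lt_add_left h1 _
        _ = (blk (m / k) + 1) * r := by ring
        _ ≤ blk (m' / k) * r := Nat.mul_le_mul_right r (by omega)
        _ ≤ _ := Nat.le_add_right _ _
  refine ⟨extSM ρ k, extSM c (t * k), extSM_strictMono hk0 hρmono,
    extSM_strictMono htk hcmono, ?_, ?_, ?_⟩
  · intro a ha; rw [extSM_eq ha]; exact hρlt a ha
  · intro b hb; rw [extSM_eq hb]
    have h1 : off (blk (b / k)) (ρ (u (b % k))) < r :=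
      hofflt (b / k) (hdiv b hb) (u (b % k)) (hu _ (Nat.mod_lt _ hk0))
    have h2 : blk (b / k) + 1 ≤ 2 * t - 1 := hblkmax (b / k) (hdiv b hb)
    calc c b < blk (b / k) * r + r := Nat.add_lt_add_left h1 _
      _ = (blk (b / k) + 1) * r := by ring
      _ ≤ (2 * t - 1) * r := Nat.mul_le_mul_right r h2
  · intro a b ha hb hPab
    have hab := hP a b ha hb hPab
    rw [extSM_eq ha, extSM_eq hb]
    show F (ρ a) (blk (b / k) * r + off (blk (b / k)) (ρ (u (b % k))))
    rw [← hab]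
    exact hF (b / k) (hdiv b hb) a ha

lemma upperBound (k t : ℕ) (hk : 2 ≤ k) (ht : 1 ≤ t) :
    ∃ r, ∀ B : ℕ → ℕ → ℕ → Prop, (∀ b < 2 * t - 1, IsPermMat r (B b)) →
      PContains (hcat r B) r ((2 * t - 1) * r) (Amat k) k (t * k) ∨
      PContains (hcat r B) r ((2 * t - 1) * r) (Bmat k) k (t * k) := by
  classical
  refine ⟨esN (2 * t - 1) k, ?_⟩
  intro B hB
  set r := esN (2 * t - 1) k with hr
  have hrk : k ≤ r := esN_ge _ _ (by omega)
  have hr0 : 0 < r := by omega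
  set π : ℕ → ℕ → ℕ := fun b => if h : b < 2 * t - 1 then (hB b h).choose else id with hπ
  have hπbij : ∀ b < 2 * t - 1, Set.BijOn (π b) (Set.Iio r) (Set.Iio r) := by
    intro b hb; simp only [hπ, dif_pos hb]; exact (hB b hb).choose_spec.1
  have hπiff : ∀ b < 2 * t - 1, ∀ i j, B b i j ↔ (j < r ∧ i = π b j) := by
    intro b hb; simp only [hπ, dif_pos hb]; exact (hB b hb).choose_spec.2
  set g : ℕ → ℕ → ℕ := fun b => Function.invFunOn (π b) (Set.Iio r) with hg
  have hginv : ∀ b < 2 * t - 1, ∀ y < r, π b (g b y) = y ∧ g b y < r := by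
    intro b hb y hy
    obtain ⟨x, hx, hxy⟩ := (hπbij b hb).surjOn (Set.mem_Iio.mpr hy)
    exact ⟨Function.invFunOn_eq ⟨x, hx, hxy⟩, Function.invFunOn_mem ⟨x, hx, hxy⟩⟩
  have hginj : ∀ b < 2 * t - 1, Set.InjOn (g b) (Set.Iio r) := by
    intro b hb y hy y' hy' he
    have h1 := hginv b hb y hy
    have h2 := hginv b hb y' hy'
    rw [← h1.1, ← h2.1, he]
  obtain ⟨ρ, hρmono, hρlt, hρm⟩ := ramseyPerm k (by omega) (2 * t - 1) g
    (fun j hj => hginj j hj)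
  set S : Finset ℕ :=
    (Finset.range (2 * t - 1)).filter (fun b => StrictMonoOn (g b ∘ ρ) (Set.Iio k)) with hS
  set S' : Finset ℕ :=
    (Finset.range (2 * t - 1)).filter (fun b => StrictAntiOn (g b ∘ ρ) (Set.Iio k)) with hS'
  have hcover : Finset.range (2 * t - 1) ⊆ S ∪ S' := by
    intro b hb
    have hb' := Finset.mem_range.mp hb
    rcases hρm b hb' with h | h
    · exact Finset.mem_union_left _ (Finset.mem_filter.mpr ⟨hb, h⟩)
    · exact Finset.mem_union_right _ (Finset.mem_filter.mpr ⟨hb, h⟩)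
  have hcard : t ≤ S.card ∨ t ≤ S'.card := by
    by_contra hcon
    push_neg at hcon
    have hc1 := Finset.card_le_card hcover
    have hc2 := Finset.card_union_le S S'
    rw [Finset.card_range] at hc1
    omega
  have hmain : ∀ (T : Finset ℕ), T.card = t → (∀ b ∈ T, b < 2 * t - 1) →
      ∀ (P : ℕ → ℕ → Prop) (u : ℕ → ℕ), (∀ j < k, u j < k) →
      (∀ a b, a < k → b < t * k → P a b → a = u (b % k)) →
      (∀ b ∈ T, ∀ i i', i < k → i' < k → i < i' → g b (ρ (u i)) < g b (ρ (u i'))) →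
      PContains (hcat r B) r ((2 * t - 1) * r) P k (t * k) := by
    intro T hTcard hTlt P u hu hP hmono
    set blk : ℕ → ℕ := fun j => if h : j < t then (T.orderEmbOfFin hTcard ⟨j, h⟩ : ℕ) else 0
      with hblk
    have hblkmem : ∀ j < t, blk j ∈ T := by
      intro j hj; simp only [hblk, dif_pos hj]; exact T.orderEmbOfFin_mem hTcard _
    have hblkmono : StrictMonoOn blk (Set.Iio t) := by
      intro i hi j hj hij
      simp only [Set.mem_Iio] at hi hj
      simp only [hblk, dif_pos hi, dif_pos hj]
      exact (T.orderEmbOfFin hTcard).strictMono (show (⟨i, hi⟩ : Fin t) < ⟨j, hj⟩ from hij)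
    have hblkmax : ∀ j < t, blk j < 2 * t - 1 := fun j hj => hTlt _ (hblkmem j hj)
    apply buildContain r k t hk ht hr0 (hcat r B) P u hu hP blk hblkmono hblkmax ρ hρmono
      (fun a ha => hρlt a ha) g
    · intro j hj a ha
      exact (hginv (blk j) (hblkmax j hj) (ρ a) (hρlt a ha)).2
    · intro j hj i i' hi hi' hii
      exact hmono (blk j) (hblkmem j hj) i i' hi hi' hii
    · intro j hj a ha
      have hbj := hblkmax j hj
      have hinv := hginv (blk j) hbj (ρ a) (hρlt a ha)
      show B ((blk j * r + g (blk j) (ρ a)) / r) (ρ a) ((blk j * r + g (blk j) (ρ a)) % r)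
      have hdiv : (blk j * r + g (blk j) (ρ a)) / r = blk j := by
        rw [Nat.mul_comm, Nat.mul_add_div hr0, Nat.div_eq_of_lt hinv.2, Nat.add_zero]
      have hmod : (blk j * r + g (blk j) (ρ a)) % r = g (blk j) (ρ a) := by
        rw [Nat.mul_comm, Nat.mul_add_mod, Nat.mod_eq_of_lt hinv.2]
      rw [hdiv, hmod]
      exact (hπiff (blk j) hbj _ _).mpr ⟨hinv.2, hinv.1.symm⟩
  rcases hcard with hc | hc
  · obtain ⟨T, hTsub, hTcard⟩ := Finset.exists_subset_card_eq (s := S) (n := t) hc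
    left
    apply hmain T hTcard
    · intro b hb
      exact Finset.mem_range.mp (Finset.mem_filter.mp (hTsub hb)).1
    · exact fun j hj => hj
    · exact fun a b _ _ h => h.2
    · intro b hb i i' hi hi' hii
      have := (Finset.mem_filter.mp (hTsub hb)).2
      exact this (Set.mem_Iio.mpr hi) (Set.mem_Iio.mpr hi') hii
  · obtain ⟨T, hTsub, hTcard⟩ := Finset.exists_subset_card_eq (s := S') (n := t) hc
    right
    refine hmain T hTcard ?_ (Bmat k) (fun i => k - 1 - i)
      (fun j hj => by show k - 1 - j < k; omega)
      (fun a b _ _ h => h.2) ?_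
    · intro b hb
      exact Finset.mem_range.mp (Finset.mem_filter.mp (hTsub hb)).1
    · intro b hb i i' hi hi' hii
      have hanti := (Finset.mem_filter.mp (hTsub hb)).2
      show g b (ρ (k - 1 - i)) < g b (ρ (k - 1 - i'))
      exact hanti (Set.mem_Iio.mpr (show k - 1 - i' < k by omega))
        (Set.mem_Iio.mpr (show k - 1 - i < k by omega))
        (show k - 1 - i' < k - 1 - i by omega)

lemma permId (r : ℕ) : IsPermMat r (idMat r) :=
  ⟨id, Set.bijOn_id _, fun _ _ => Iff.rfl⟩

lemma permRev (r : ℕ) : IsPermMat r (revMat r) := by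
  refine ⟨fun j => r - 1 - j, ⟨?_, ?_, ?_⟩, fun i j => Iff.rfl⟩
  · intro x hx
    simp only [Set.mem_Iio] at hx ⊢
    omega
  · intro x hx y hy he
    simp only [Set.mem_Iio] at hx hy
    have he' : r - 1 - x = r - 1 - y := he
    omega
  · intro y hy
    simp only [Set.mem_Iio] at hy
    exact ⟨r - 1 - y, Set.mem_Iio.mpr (by omega), show r - 1 - (r - 1 - y) = y by omega⟩

lemma lowerBound (k t r : ℕ) (hk : 2 ≤ k) (ht : 1 ≤ t) :
    ∃ B : ℕ → ℕ → ℕ → Prop, (∀ b < 2 * t - 2, IsPermMat r (B b)) ∧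
      ¬ PContains (hcat r B) r ((2 * t - 2) * r) (Amat k) k (t * k) ∧
      ¬ PContains (hcat r B) r ((2 * t - 2) * r) (Bmat k) k (t * k) := by
  classical
  have hk0 : 0 < k := by omega
  by_cases htriv : r < k
  · refine ⟨fun _ => idMat r, fun b _ => permId r, ?_, ?_⟩ <;>
    · rintro ⟨ri, ci, hri, hci, hrilt, hcilt, _⟩
      have h1 : ri (k - 1) < r := hrilt (k - 1) (by omega)
      have h2 : k - 1 ≤ ri (k - 1) := hri.le_apply
      omega
  by_cases ht1 : t = 1
  · subst ht1
    refine ⟨fun _ => idMat r, fun b _ => permId r, ?_, ?_⟩ <;>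
    · rintro ⟨ri, ci, hri, hci, hrilt, hcilt, _⟩
      have h1 : ci 0 < (2 * 1 - 2) * r := hcilt 0 (by omega)
      omega
  have ht2 : 2 ≤ t := by omega
  have hr : k ≤ r := by omega
  have hr0 : 0 < r := by omega
  set Bf : ℕ → ℕ → ℕ → Prop := fun b => if b % 2 = 0 then idMat r else revMat r with hBf
  have hperm : ∀ b < 2 * t - 2, IsPermMat r (Bf b) := by
    intro b _
    by_cases hb : b % 2 = 0
    · simp only [hBf, if_pos hb]; exact permId r
    · simp only [hBf, if_neg hb]; exact permRev r
  -- key comparison fact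
  have key : ∀ ρ ρ' c c' : ℕ, hcat r Bf ρ c → hcat r Bf ρ' c' → c < c' → c / r = c' / r →
      ((c / r) % 2 = 0 ∧ ρ < ρ') ∨ ((c / r) % 2 = 1 ∧ ρ' < ρ) := by
    intro ρ ρ' c c' h h' hcc hdd
    have e1 : r * (c / r) + c % r = c := Nat.div_add_mod c r
    have e2 : r * (c / r) + c' % r = c' := by rw [hdd]; exact Nat.div_add_mod c' r
    have hax : c % r < c' % r := by
      have h3 : r * (c / r) + c % r < r * (c / r) + c' % r := by rw [e1, e2]; exact hcc
      exact Nat.lt_of_add_lt_add_left h3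
    have h2 : Bf (c / r) ρ (c % r) := h
    have h2' : Bf (c / r) ρ' (c' % r) := by rw [hdd]; exact h'
    by_cases hb : (c / r) % 2 = 0
    · rw [hBf] at h2 h2'
      simp only [if_pos hb] at h2 h2'
      obtain ⟨hl1, he1⟩ := h2
      obtain ⟨hl2, he2⟩ := h2'
      exact Or.inl ⟨hb, by rw [he1, he2]; exact hax⟩
    · rw [hBf] at h2 h2'
      simp only [if_neg hb] at h2 h2'
      obtain ⟨hl1, he1⟩ := h2
      obtain ⟨hl2, he2⟩ := h2'
      refine Or.inr ⟨by omega, ?_⟩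
      rw [he1, he2]
      have hle : c' % r ≤ r - 1 := by omega
      omega
  refine ⟨Bf, hperm, ?_, ?_⟩
  -- A pattern avoided
  · rintro ⟨ri, ci, hri, hci, hrilt, hcilt, hcont⟩
    set ρ0 := ri 0 with hρ0
    set ρ1 := ri (k - 1) with hρ1
    have hρ : ρ0 < ρ1 := hri (by omega)
    have hidx1 : ∀ g, g < t → g * k < t * k := fun g hg =>
      Nat.mul_lt_mul_of_pos_right hg hk0
    have hidx2 : ∀ g, g < t → g * k + (k - 1) < t * k := by
      intro g hg
      have h1 : (g + 1) * k ≤ t * k := Nat.mul_le_mul_right k (by omega)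
      rw [add_mul, one_mul] at h1
      omega
    have hmod0 : ∀ g : ℕ, (g * k) % k = 0 := fun g => Nat.mul_mod_left g k
    have hmod1 : ∀ g : ℕ, (g * k + (k - 1)) % k = k - 1 := by
      intro g
      rw [Nat.add_comm, Nat.add_mul_mod_self_right]
      exact Nat.mod_eq_of_lt (by omega)
    have hF0 : ∀ g < t, hcat r Bf ρ0 (ci (g * k)) := by
      intro g hg
      apply hcont 0 (g * k) (by omega) (hidx1 g hg)
      show (g * k) % k < k ∧ 0 = (g * k) % k
      rw [hmod0]
      omega
    have hF1 : ∀ g < t, hcat r Bf ρ1 (ci (g * k + (k - 1))) := by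
      intro g hg
      apply hcont (k - 1) (g * k + (k - 1)) (by omega) (hidx2 g hg)
      show (g * k + (k - 1)) % k < k ∧ k - 1 = (g * k + (k - 1)) % k
      rw [hmod1]
      omega
    set s : ℕ → ℕ := fun g => ci (g * k) / r with hs
    set e : ℕ → ℕ := fun g => ci (g * k + (k - 1)) / r with he
    have hse : ∀ g, s g ≤ e g := fun g =>
      Nat.div_le_div_right (le_of_lt (hci (show g * k < g * k + (k - 1) by omega)))
    have hes : ∀ g, e g ≤ s (g + 1) := by
      intro g
      apply Nat.div_le_div_right
      apply le_of_lt
      apply hci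
      rw [add_mul, one_mul]
      omega
    have hemax : ∀ g < t, e g < 2 * t - 2 := by
      intro g hg
      rw [he]
      exact (Nat.div_lt_iff_lt_mul hr0).mpr (hcilt _ (hidx2 g hg))
    have hkey2 : ∀ g < t, s g = e g → s g % 2 = 0 := by
      intro g hg hseq
      rcases key ρ0 ρ1 (ci (g * k)) (ci (g * k + (k - 1))) (hF0 g hg) (hF1 g hg)
        (hci (by omega)) hseq with h | h
      · exact h.1
      · omega
    have hkey3 : ∀ g, g + 1 < t → e g = s (g + 1) → e g % 2 = 1 := by
      intro g hg heq
      rcases key ρ1 ρ0 (ci (g * k + (k - 1))) (ci ((g + 1) * k)) (hF1 g (by omega))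
        (hF0 (g + 1) hg) (hci (by rw [add_mul, one_mul]; omega)) heq with h | h
      · omega
      · exact h.1
    have h1 : ∀ g < t - 1, s g < s (g + 1) := by
      intro g hg
      have ha := hse g
      have hb := hes g
      by_contra hcon
      have h2 : s g = e g := by omega
      have h3 : e g = s (g + 1) := by omega
      have := hkey2 g (by omega) h2
      have := hkey3 g (by omega) h3
      omega
    have h2 : ∀ g < t - 1, s (g + 1) = s g + 1 → s g % 2 = 0 := by
      intro g hg heq
      have ha := hse g
      have hb := hes g
      by_cases hcase : e g = s g
      · exact hkey2 g (by omega) hcase.symm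
      · have h3 : e g = s (g + 1) := by omega
        have := hkey3 g (by omega) h3
        omega
    have hfin := phi_bound 0 (t - 1) s (by omega) h1 h2 (t - 1) (le_refl _)
    have hst : s (t - 1) ≤ e (t - 1) := hse (t - 1)
    have het : e (t - 1) < 2 * t - 2 := hemax (t - 1) (by omega)
    by_cases hpar : s (t - 1) % 2 = 0
    · have := hfin.2 hpar
      omega
    · have hs1 := hfin.1
      have hseq : s (t - 1) = e (t - 1) := by omega
      have := hkey2 (t - 1) (by omega) hseq
      omega
  -- B pattern avoided
  · rintro ⟨ri, ci, hri, hci, hrilt, hcilt, hcont⟩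
    set ρ0 := ri 0 with hρ0
    set ρ1 := ri (k - 1) with hρ1
    have hρ : ρ0 < ρ1 := hri (by omega)
    have hidx1 : ∀ g, g < t → g * k < t * k := fun g hg =>
      Nat.mul_lt_mul_of_pos_right hg hk0
    have hidx2 : ∀ g, g < t → g * k + (k - 1) < t * k := by
      intro g hg
      have h1 : (g + 1) * k ≤ t * k := Nat.mul_le_mul_right k (by omega)
      rw [add_mul, one_mul] at h1
      omega
    have hmod0 : ∀ g : ℕ, (g * k) % k = 0 := fun g => Nat.mul_mod_left g k
    have hmod1 : ∀ g : ℕ, (g * k + (k - 1)) % k = k - 1 := by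
      intro g
      rw [Nat.add_comm, Nat.add_mul_mod_self_right]
      exact Nat.mod_eq_of_lt (by omega)
    have hF0 : ∀ g < t, hcat r Bf ρ1 (ci (g * k)) := by
      intro g hg
      apply hcont (k - 1) (g * k) (by omega) (hidx1 g hg)
      show (g * k) % k < k ∧ k - 1 = k - 1 - (g * k) % k
      rw [hmod0]
      omega
    have hF1 : ∀ g < t, hcat r Bf ρ0 (ci (g * k + (k - 1))) := by
      intro g hg
      apply hcont 0 (g * k + (k - 1)) (by omega) (hidx2 g hg)
      show (g * k + (k - 1)) % k < k ∧ 0 = k - 1 - (g * k + (k - 1)) % k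
      rw [hmod1]
      omega
    set s : ℕ → ℕ := fun g => ci (g * k) / r with hs
    set e : ℕ → ℕ := fun g => ci (g * k + (k - 1)) / r with he
    have hse : ∀ g, s g ≤ e g := fun g =>
      Nat.div_le_div_right (le_of_lt (hci (show g * k < g * k + (k - 1) by omega)))
    have hes : ∀ g, e g ≤ s (g + 1) := by
      intro g
      apply Nat.div_le_div_right
      apply le_of_lt
      apply hci
      rw [add_mul, one_mul]
      omega
    have hemax : ∀ g < t, e g < 2 * t - 2 := by
      intro g hg
      rw [he]
      exact (Nat.div_lt_iff_lt_mul hr0).mpr (hcilt _ (hidx2 g hg))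
    have hkey2 : ∀ g < t, s g = e g → s g % 2 = 1 := by
      intro g hg hseq
      rcases key ρ1 ρ0 (ci (g * k)) (ci (g * k + (k - 1))) (hF0 g hg) (hF1 g hg)
        (hci (by omega)) hseq with h | h
      · omega
      · exact h.1
    have hkey3 : ∀ g, g + 1 < t → e g = s (g + 1) → e g % 2 = 0 := by
      intro g hg heq
      rcases key ρ0 ρ1 (ci (g * k + (k - 1))) (ci ((g + 1) * k)) (hF1 g (by omega))
        (hF0 (g + 1) hg) (hci (by rw [add_mul, one_mul]; omega)) heq with h | h
      · exact h.1
      · omega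
    have h1 : ∀ g < t - 1, s g < s (g + 1) := by
      intro g hg
      have ha := hse g
      have hb := hes g
      by_contra hcon
      have h2 : s g = e g := by omega
      have h3 : e g = s (g + 1) := by omega
      have := hkey2 g (by omega) h2
      have := hkey3 g (by omega) h3
      omega
    have h2 : ∀ g < t - 1, s (g + 1) = s g + 1 → s g % 2 = 1 := by
      intro g hg heq
      have ha := hse g
      have hb := hes g
      by_cases hcase : e g = s g
      · exact hkey2 g (by omega) hcase.symm
      · have h3 : e g = s (g + 1) := by omega
        have := hkey3 g (by omega) h3
        omega
    have hfin := phi_bound 1 (t - 1) s (by omega) h1 h2 (t - 1) (le_refl _)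
    have hst : s (t - 1) ≤ e (t - 1) := hse (t - 1)
    have het : e (t - 1) < 2 * t - 2 := hemax (t - 1) (by omega)
    have := hfin.1
    omega

/-- `mfw({A_{k,t}, B_{k,t}}) = 2t-1` for `k ≥ 2`, `t ≥ 1`: there exists `r` such that
every permutation matrix `(r, 2t-1)`-formation contains `A_{k,t}` or `B_{k,t}`, and for
every `r` there is a permutation matrix `(r, 2t-2)`-formation avoiding both. -/
theorem mfw_A_B (k t : ℕ) (hk : 2 ≤ k) (ht : 1 ≤ t) :
    (∃ r, ∀ B : ℕ → ℕ → ℕ → Prop, (∀ b < 2 * t - 1, IsPermMat r (B b)) →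
      PContains (hcat r B) r ((2 * t - 1) * r) (Amat k) k (t * k) ∨
      PContains (hcat r B) r ((2 * t - 1) * r) (Bmat k) k (t * k)) ∧
    (∀ r, ∃ B : ℕ → ℕ → ℕ → Prop, (∀ b < 2 * t - 2, IsPermMat r (B b)) ∧
      ¬ PContains (hcat r B) r ((2 * t - 2) * r) (Amat k) k (t * k) ∧
      ¬ PContains (hcat r B) r ((2 * t - 2) * r) (Bmat k) k (t * k)) :=
  ⟨upperBound k t hk ht, fun r => lowerBound k t r hk ht⟩
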